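/- Let ω : [0,T] → ℝ be continuous with ω(0) = 0, let b < 0 < b̄ and b < K₂ < K₁ < b̄. Define α₁ = 1/(b̄−K₁), α₂ = 1/(K₂−b), β₁ = α₁, β₂ = α₂, β₃ = α₁+α₂. Then the indicator of the event {sup ω < b̄ or inf ω ≤ b} is bounded above by α₂(K₂−ω(T))⁺ + α₁(K₁−ω(T))⁺ + 1_{ω(T) < b̄} − α₁(ω(T)−b̄)⁺ + β₁(ω(T)−b̄)·1_{H_{b̄} < H_b ∧ T} + β₂(ω(T)−b)·1_{H_{b̄} < H_b ≤ T} + β₃(ω(T)−b)·1_{H_b < H_{b̄} ∧ T}. -/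
import Mathlib


open Set

noncomputable def pos (x : ℝ) : ℝ := max x 0

open Classical in
noncomputable def ind (P : Prop) : ℝ := if P then 1 else 0

/-- First hitting time (before time `T`) of level `x` by the path `ω`, valued in `EReal`
(`⊤` if the level is not hit in `[0,T]`). -/
noncomputable def hit (ω : ℝ → ℝ) (T x : ℝ) : EReal :=
  sInf {s : EReal | ∃ t : ℝ, s = (t : EReal) ∧ 0 ≤ t ∧ t ≤ T ∧ ω t = x}

lemma pos_ge (y : ℝ) : y ≤ pos y := le_max_left _ _
lemma pos_nonneg' (y : ℝ) : 0 ≤ pos y := le_max_right _ _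
lemma pos_of_nonpos {y : ℝ} (h : y ≤ 0) : pos y = 0 := max_eq_right h
lemma pos_of_nonneg {y : ℝ} (h : 0 ≤ y) : pos y = y := max_eq_left h

lemma ind_pos {P : Prop} (h : P) : ind P = 1 := if_pos h
lemma ind_neg {P : Prop} (h : ¬P) : ind P = 0 := if_neg h

lemma hit_eq_top {ω : ℝ → ℝ} {T x : ℝ}
    (hne : ∀ t, 0 ≤ t → t ≤ T → ω t ≠ x) : hit ω T x = ⊤ := by
  rw [hit, sInf_eq_top]
  rintro s ⟨t, rfl, h0, hT', hx⟩
  exact absurd hx (hne t h0 hT')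

lemma hit_spec {ω : ℝ → ℝ} {T x : ℝ}
    (hcont : ContinuousOn ω (Icc 0 T))
    (t : ℝ) (ht0 : 0 ≤ t) (htT : t ≤ T) (htx : ω t = x) :
    ∃ t₀, 0 ≤ t₀ ∧ t₀ ≤ T ∧ ω t₀ = x ∧ hit ω T x = (t₀ : EReal) := by
  set S : Set ℝ := Icc 0 T ∩ ω ⁻¹' {x} with hS
  have hclosed : IsClosed S :=
    hcont.preimage_isClosed_of_isClosed isClosed_Icc isClosed_singleton
  have hcomp : IsCompact S :=
    isCompact_Icc.of_isClosed_subset hclosed inter_subset_left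
  have hne : S.Nonempty := ⟨t, ⟨ht0, htT⟩, htx⟩
  have hmem : sInf S ∈ S := hcomp.sInf_mem hne
  refine ⟨sInf S, hmem.1.1, hmem.1.2, hmem.2, ?_⟩
  apply le_antisymm
  · exact sInf_le ⟨sInf S, rfl, hmem.1.1, hmem.1.2, hmem.2⟩
  · apply le_sInf
    rintro s ⟨u, rfl, h0, hT', hx'⟩
    exact_mod_cast csInf_le hcomp.bddBelow ⟨⟨h0, hT'⟩, hx'⟩

lemma reach_ub {ω : ℝ → ℝ} {T ub : ℝ} (hT : 0 ≤ T)
    (hcont : ContinuousOn ω (Icc 0 T)) (hω0 : ω 0 = 0) (hub : 0 < ub)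
    (h : ub ≤ sSup (ω '' Icc 0 T)) : ∃ t, 0 ≤ t ∧ t ≤ T ∧ ω t = ub := by
  have hne : (Icc (0:ℝ) T).Nonempty := nonempty_Icc.2 hT
  have hcomp : IsCompact (ω '' Icc 0 T) := isCompact_Icc.image_of_continuousOn hcont
  obtain ⟨t₁, ht₁, hωt₁⟩ := hcomp.sSup_mem (hne.image ω)
  have hsub : Icc (ω 0) (ω t₁) ⊆ ω '' Icc 0 t₁ :=
    intermediate_value_Icc ht₁.1 (hcont.mono (Icc_subset_Icc le_rfl ht₁.2))
  have hmem : ub ∈ Icc (ω 0) (ω t₁) := by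
    rw [hω0, hωt₁]; exact ⟨hub.le, h⟩
  obtain ⟨t, ht, hωt⟩ := hsub hmem
  exact ⟨t, ht.1, ht.2.trans ht₁.2, hωt⟩

lemma reach_lb {ω : ℝ → ℝ} {T lb : ℝ} (hT : 0 ≤ T)
    (hcont : ContinuousOn ω (Icc 0 T)) (hω0 : ω 0 = 0) (hlb : lb < 0)
    (h : sInf (ω '' Icc 0 T) ≤ lb) : ∃ t, 0 ≤ t ∧ t ≤ T ∧ ω t = lb := by
  have hne : (Icc (0:ℝ) T).Nonempty := nonempty_Icc.2 hT
  have hcomp : IsCompact (ω '' Icc 0 T) := isCompact_Icc.image_of_continuousOn hcont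
  obtain ⟨t₂, ht₂, hωt₂⟩ := hcomp.sInf_mem (hne.image ω)
  have hsub : Icc (ω t₂) (ω 0) ⊆ ω '' Icc 0 t₂ :=
    intermediate_value_Icc' ht₂.1 (hcont.mono (Icc_subset_Icc le_rfl ht₂.2))
  have hmem : lb ∈ Icc (ω t₂) (ω 0) := by
    rw [hω0, hωt₂]; exact ⟨h, hlb.le⟩
  obtain ⟨t, ht, hωt⟩ := hsub hmem
  exact ⟨t, ht.1, ht.2.trans ht₂.2, hωt⟩

lemma sup_ge {ω : ℝ → ℝ} {T : ℝ} (hcont : ContinuousOn ω (Icc 0 T))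
    {t : ℝ} (h0 : 0 ≤ t) (hTt : t ≤ T) : ω t ≤ sSup (ω '' Icc 0 T) :=
  le_csSup (isCompact_Icc.image_of_continuousOn hcont).bddAbove ⟨t, ⟨h0, hTt⟩, rfl⟩

lemma inf_le' {ω : ℝ → ℝ} {T : ℝ} (hcont : ContinuousOn ω (Icc 0 T))
    {t : ℝ} (h0 : 0 ≤ t) (hTt : t ≤ T) : sInf (ω '' Icc 0 T) ≤ ω t :=
  csInf_le (isCompact_Icc.image_of_continuousOn hcont).bddBelow ⟨t, ⟨h0, hTt⟩, rfl⟩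

set_option maxHeartbeats 1000000 in
theorem stmt4 (T : ℝ) (hT : 0 < T) (ω : ℝ → ℝ)
    (hcont : ContinuousOn ω (Icc 0 T)) (hω0 : ω 0 = 0)
    (lb ub K₁ K₂ : ℝ) (hlb : lb < 0) (hub : 0 < ub)
    (h1 : lb < K₂) (h2 : K₂ < K₁) (h3 : K₁ < ub) :
    ind (sSup (ω '' Icc 0 T) < ub ∨ sInf (ω '' Icc 0 T) ≤ lb) ≤
      (1 / (K₂ - lb)) * pos (K₂ - ω T) + (1 / (ub - K₁)) * pos (K₁ - ω T) +
        ind (ω T < ub) - (1 / (ub - K₁)) * pos (ω T - ub) +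
        (1 / (ub - K₁)) * (ω T - ub) *
          ind (hit ω T ub < min (hit ω T lb) (T : EReal)) +
        (1 / (K₂ - lb)) * (ω T - lb) *
          ind (hit ω T ub < hit ω T lb ∧ hit ω T lb ≤ (T : EReal)) +
        (1 / (ub - K₁) + 1 / (K₂ - lb)) * (ω T - lb) *
          ind (hit ω T lb < min (hit ω T ub) (T : EReal)) := by
  have hK1 : (0:ℝ) < ub - K₁ := by linarith
  have hK2 : (0:ℝ) < K₂ - lb := by linarith
  have ha1 : 1/(ub-K₁) * (ub-K₁) = 1 := one_div_mul_cancel hK1.ne'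
  have ha2 : 1/(K₂-lb) * (K₂-lb) = 1 := one_div_mul_cancel hK2.ne'
  have ha1p : (0:ℝ) ≤ 1/(ub-K₁) := by positivity
  have ha2p : (0:ℝ) ≤ 1/(K₂-lb) := by positivity
  have hp1 : 1/(ub-K₁) * (K₁ - ω T) ≤ 1/(ub-K₁) * pos (K₁ - ω T) :=
    mul_le_mul_of_nonneg_left (pos_ge _) ha1p
  have hp2 : 1/(K₂-lb) * (K₂ - ω T) ≤ 1/(K₂-lb) * pos (K₂ - ω T) :=
    mul_le_mul_of_nonneg_left (pos_ge _) ha2p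
  have hp1n : (0:ℝ) ≤ 1/(ub-K₁) * pos (K₁ - ω T) := mul_nonneg ha1p (pos_nonneg' _)
  have hp2n : (0:ℝ) ≤ 1/(K₂-lb) * pos (K₂ - ω T) := mul_nonneg ha2p (pos_nonneg' _)
  by_cases hU : ∃ t, 0 ≤ t ∧ t ≤ T ∧ ω t = ub
  · obtain ⟨t, ht0, htT, htx⟩ := hU
    obtain ⟨t₁, h10, h1T, h1x, hub_eq⟩ := hit_spec hcont t ht0 htT htx
    by_cases hL : ∃ t, 0 ≤ t ∧ t ≤ T ∧ ω t = lb
    · -- both hit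
      obtain ⟨s, hs0, hsT, hsx⟩ := hL
      obtain ⟨t₂, h20, h2T, h2x, hlb_eq⟩ := hit_spec hcont s hs0 hsT hsx
      have hLHS : sInf (ω '' Icc 0 T) ≤ lb := h2x ▸ inf_le' hcont h20 h2T
      rw [ind_pos (Or.inr hLHS)]
      have hne12 : t₁ ≠ t₂ := by
        intro h; rw [h, h2x] at h1x; linarith
      rcases hne12.lt_or_gt with hlt | hlt
      · -- t₁ < t₂ : hits ub first, then lb
        have h1T' : t₁ < T := lt_of_lt_of_le hlt h2T
        have i1 : hit ω T ub < min (hit ω T lb) (T : EReal) := by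
          rw [hub_eq, hlb_eq]
          exact lt_min (by exact_mod_cast hlt) (by exact_mod_cast h1T')
        have i2 : hit ω T ub < hit ω T lb ∧ hit ω T lb ≤ (T : EReal) := by
          rw [hub_eq, hlb_eq]
          exact ⟨by exact_mod_cast hlt, by exact_mod_cast h2T⟩
        have i3 : ¬ (hit ω T lb < min (hit ω T ub) (T : EReal)) := by
          rw [hub_eq, hlb_eq, lt_min_iff]
          rintro ⟨h, -⟩
          exact absurd (by exact_mod_cast h : t₂ < t₁) (not_lt.2 hlt.le)
        rw [ind_pos i1, ind_pos i2, ind_neg i3]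
        by_cases hxu : ω T < ub
        · rw [ind_pos hxu, pos_of_nonpos (by linarith : ω T - ub ≤ 0)]
          linarith [hp1, hp2, ha1, ha2]
        · rw [ind_neg hxu, pos_of_nonneg (by push_neg at hxu; linarith : (0:ℝ) ≤ ω T - ub)]
          linarith [hp1n, hp2, ha2]
      · -- t₂ < t₁ : hits lb first
        have h2T' : t₂ < T := lt_of_lt_of_le hlt h1T
        have i1 : ¬ (hit ω T ub < min (hit ω T lb) (T : EReal)) := by
          rw [hub_eq, hlb_eq, lt_min_iff]
          rintro ⟨h, -⟩
          exact absurd (by exact_mod_cast h : t₁ < t₂) (not_lt.2 hlt.le)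
        have i2 : ¬ (hit ω T ub < hit ω T lb ∧ hit ω T lb ≤ (T : EReal)) := by
          rw [hub_eq, hlb_eq]
          rintro ⟨h, -⟩
          exact absurd (by exact_mod_cast h : t₁ < t₂) (not_lt.2 hlt.le)
        have i3 : hit ω T lb < min (hit ω T ub) (T : EReal) := by
          rw [hub_eq, hlb_eq]
          exact lt_min (by exact_mod_cast hlt) (by exact_mod_cast h2T')
        rw [ind_neg i1, ind_neg i2, ind_pos i3]
        by_cases hxu : ω T < ub
        · rw [ind_pos hxu, pos_of_nonpos (by linarith : ω T - ub ≤ 0)]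
          linarith [hp1, hp2, ha1, ha2, mul_nonneg ha1p (by linarith : (0:ℝ) ≤ K₁ - lb)]
        · rw [ind_neg hxu, pos_of_nonneg (by push_neg at hxu; linarith : (0:ℝ) ≤ ω T - ub)]
          linarith [hp1n, hp2, ha2, mul_nonneg ha1p (by linarith : (0:ℝ) ≤ ub - lb)]
    · -- hits ub, never hits lb
      push_neg at hL
      have hlb_eq : hit ω T lb = ⊤ := hit_eq_top fun t h0 hT' hx => hL t h0 hT' hx
      have hsup : ¬ (sSup (ω '' Icc 0 T) < ub) :=
        not_lt.2 (h1x ▸ sup_ge hcont h10 h1T)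
      have hinf : ¬ (sInf (ω '' Icc 0 T) ≤ lb) := by
        intro h
        obtain ⟨t', ht'0, ht'T, ht'x⟩ := reach_lb hT.le hcont hω0 hlb h
        exact hL t' ht'0 ht'T ht'x
      rw [ind_neg (not_or.2 ⟨hsup, hinf⟩)]
      have i2 : ¬ (hit ω T ub < hit ω T lb ∧ hit ω T lb ≤ (T : EReal)) := by
        rw [hlb_eq]
        rintro ⟨-, h⟩
        exact absurd h (by simp)
      have i3 : ¬ (hit ω T lb < min (hit ω T ub) (T : EReal)) := by
        rw [hlb_eq]; exact not_top_lt
      rw [ind_neg i2, ind_neg i3]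
      by_cases h1T' : t₁ < T
      · have i1 : hit ω T ub < min (hit ω T lb) (T : EReal) := by
          rw [hub_eq, hlb_eq]
          exact lt_min (EReal.coe_lt_top t₁) (by exact_mod_cast h1T')
        rw [ind_pos i1]
        by_cases hxu : ω T < ub
        · rw [ind_pos hxu, pos_of_nonpos (by linarith : ω T - ub ≤ 0)]
          linarith [hp1, hp2n, ha1]
        · rw [ind_neg hxu, pos_of_nonneg (by push_neg at hxu; linarith : (0:ℝ) ≤ ω T - ub)]
          linarith [hp1n, hp2n]
      · -- t₁ = T, so ω T = ub
        have h1T'' : t₁ = T := le_antisymm h1T (not_lt.1 h1T')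
        have hxub : ω T = ub := by rw [← h1T'']; exact h1x
        have i1 : ¬ (hit ω T ub < min (hit ω T lb) (T : EReal)) := by
          rw [hub_eq, h1T'', lt_min_iff]
          rintro ⟨-, h⟩
          exact absurd (by exact_mod_cast h : T < T) (lt_irrefl T)
        rw [ind_neg i1, ind_neg (by rw [hxub]; exact lt_irrefl ub : ¬ (ω T < ub)),
          pos_of_nonpos (by rw [hxub]; linarith : ω T - ub ≤ 0)]
        linarith [hp1n, hp2n]
  · push_neg at hU
    have hub_eq : hit ω T ub = ⊤ := hit_eq_top fun t h0 hT' hx => hU t h0 hT' hx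
    have hsup : sSup (ω '' Icc 0 T) < ub := by
      by_contra h
      push_neg at h
      obtain ⟨t', ht'0, ht'T, ht'x⟩ := reach_ub hT.le hcont hω0 hub h
      exact hU t' ht'0 ht'T ht'x
    rw [ind_pos (Or.inl hsup)]
    have i1 : ¬ (hit ω T ub < min (hit ω T lb) (T : EReal)) := by
      rw [hub_eq]; exact not_top_lt
    rw [ind_neg i1]
    have hxu : ω T < ub := lt_of_le_of_lt (sup_ge hcont hT.le le_rfl) hsup
    rw [ind_pos hxu, pos_of_nonpos (by linarith : ω T - ub ≤ 0)]
    by_cases hL : ∃ t, 0 ≤ t ∧ t ≤ T ∧ ω t = lb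
    · obtain ⟨s, hs0, hsT, hsx⟩ := hL
      obtain ⟨t₂, h20, h2T, h2x, hlb_eq⟩ := hit_spec hcont s hs0 hsT hsx
      have i2 : ¬ (hit ω T ub < hit ω T lb ∧ hit ω T lb ≤ (T : EReal)) := by
        rw [hub_eq]
        rintro ⟨h, -⟩
        exact absurd h not_top_lt
      rw [ind_neg i2]
      by_cases h2T' : t₂ < T
      · have i3 : hit ω T lb < min (hit ω T ub) (T : EReal) := by
          rw [hub_eq, hlb_eq]
          exact lt_min (EReal.coe_lt_top t₂) (by exact_mod_cast h2T')
        rw [ind_pos i3]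
        linarith [hp1, hp2, ha1, ha2, mul_nonneg ha1p (by linarith : (0:ℝ) ≤ K₁ - lb)]
      · have h2T'' : t₂ = T := le_antisymm h2T (not_lt.1 h2T')
        have hxlb : ω T = lb := by rw [← h2T'']; exact h2x
        have i3 : ¬ (hit ω T lb < min (hit ω T ub) (T : EReal)) := by
          rw [hlb_eq, h2T'', lt_min_iff]
          rintro ⟨-, h⟩
          exact absurd (by exact_mod_cast h : T < T) (lt_irrefl T)
        rw [ind_neg i3]
        have hp2' : 1/(K₂-lb) * pos (K₂ - ω T) = 1 := by
          rw [hxlb, pos_of_nonneg (by linarith : (0:ℝ) ≤ K₂ - lb)]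
          exact ha2
        linarith [hp1n, hp2']
    · push_neg at hL
      have hlb_eq : hit ω T lb = ⊤ := hit_eq_top fun t h0 hT' hx => hL t h0 hT' hx
      have i2 : ¬ (hit ω T ub < hit ω T lb ∧ hit ω T lb ≤ (T : EReal)) := by
        rw [hub_eq]
        rintro ⟨h, -⟩
        exact absurd h not_top_lt
      have i3 : ¬ (hit ω T lb < min (hit ω T ub) (T : EReal)) := by
        rw [hlb_eq]; exact not_top_lt
      rw [ind_neg i2, ind_neg i3]
      linarith [hp1n, hp2n]
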